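/- Let A : ℝ → ℝ be C¹, 2π-periodic, with ∫₀^{2π} A(s) ds = 0, and let a(s) := 4A'(s). Then ∫₀^{2π} ∫₀^{π} 2x (A(t+x) − A(t−x)) (a(t+x) + a(t−x)) dx dt = −8π ∫₀^{2π} A(s)² ds. -/

import Mathlib

open MeasureTheory Real intervalIntegral

private lemma swap_helper {f : ℝ → ℝ → ℝ}
    (hf : Continuous (fun p : ℝ × ℝ => f p.1 p.2)) {a b c d : ℝ} (hab : a ≤ b) (hcd : c ≤ d) :
    ∫ t in a..b, ∫ x in c..d, f t x = ∫ x in c..d, ∫ t in a..b, f t x := by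
  rw [intervalIntegral.integral_of_le hab, intervalIntegral.integral_of_le hcd]
  simp_rw [intervalIntegral.integral_of_le hcd, intervalIntegral.integral_of_le hab]
  apply MeasureTheory.integral_integral_swap
  rw [Measure.prod_restrict, ← Measure.volume_eq_prod]
  exact ((hf.continuousOn.integrableOn_compact (isCompact_Icc.prod isCompact_Icc)).mono_set
    (Set.prod_mono Set.Ioc_subset_Icc_self Set.Ioc_subset_Icc_self))

theorem stmt13 (A : ℝ → ℝ) (hA : ContDiff ℝ 1 A) (hper : ∀ s, A (s + 2*π) = A s)
    (hmean : (∫ s in (0:ℝ)..(2*π), A s) = 0)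
    (a : ℝ → ℝ) (ha : ∀ s, a s = 4 * deriv A s) :
    (∫ t in (0:ℝ)..(2*π), ∫ x in (0:ℝ)..π,
        2*x*(A (t+x) - A (t-x))*(a (t+x) + a (t-x)))
      = -8*π * ∫ s in (0:ℝ)..(2*π), (A s)^2 := by
  have pi_pos := Real.pi_pos
  have hAc : Continuous A := hA.continuous
  have hd : Differentiable ℝ A := hA.differentiable one_ne_zero
  have hA'c : Continuous (deriv A) := hA.continuous_deriv le_rfl
  have hper' : ∀ s, deriv A (s + 2*π) = deriv A s := by
    intro s
    have hfun : (fun t => A (t + 2*π)) = A := funext hper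
    rw [← deriv_comp_add_const, hfun]
  set B : ℝ → ℝ := fun s => ∫ τ in (0:ℝ)..s, A τ with hBdef
  have hB : ∀ s, HasDerivAt B (A s) s := fun s => (hAc.integral_hasStrictDerivAt 0 s).hasDerivAt
  have hBc : Continuous B := by
    rw [continuous_iff_continuousAt]; exact fun s => (hB s).continuousAt
  have hB0 : B 0 = 0 := intervalIntegral.integral_same
  have hB2pi : B (2*π) = 0 := hmean
  have hBper : ∀ s, B (s + 2*π) = B s := by
    intro s
    have h1 : (∫ τ in (0:ℝ)..s, A τ) + ∫ τ in s..(s+2*π), A τ = ∫ τ in (0:ℝ)..(s+2*π), A τ :=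
      intervalIntegral.integral_add_adjacent_intervals (hAc.intervalIntegrable _ _)
        (hAc.intervalIntegrable _ _)
    have h2 : (∫ τ in s..(s+2*π), A τ) = ∫ τ in (0:ℝ)..(0+2*π), A τ :=
      Function.Periodic.intervalIntegral_add_eq hper s 0
    simp only [zero_add] at h2
    simp only [hBdef]
    rw [← h1, h2, hmean, add_zero]
  set I : ℝ := ∫ s in (0:ℝ)..(2*π), (A s)^2 with hIdef
  set C : ℝ := ∫ s in (0:ℝ)..(2*π), B s with hCdef
  simp only [ha]
  -- Step 1: swap
  rw [swap_helper (by fun_prop) (by positivity) (le_of_lt pi_pos)]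
  -- Step 2: inner t-integral
  have step2 : ∀ x : ℝ, (∫ t in (0:ℝ)..(2*π),
      2*x*(A (t+x) - A (t-x))*(4*deriv A (t+x) + 4*deriv A (t-x)))
      = ∫ u in (0:ℝ)..(2*π), 16*x*(A (u+2*x)*deriv A u) := by
    intro x
    have hF : ∀ t : ℝ, HasDerivAt
        (fun t => (A (t+x) - A (t-x))*(A (t+x) - A (t-x))/2 - A (t-x)*A (t-x))
        ((A (t+x) - A (t-x))*(deriv A (t+x) + deriv A (t-x)) - 2*(A (t+x)*deriv A (t-x))) t := by
      intro t
      have h1 : HasDerivAt (fun t => A (t+x)) (deriv A (t+x)) t := by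
        simpa [Function.comp_def] using ((hd (t+x)).hasDerivAt.comp t ((hasDerivAt_id t).add_const x))
      have h2 : HasDerivAt (fun t => A (t-x)) (deriv A (t-x)) t := by
        simpa [Function.comp_def] using ((hd (t-x)).hasDerivAt.comp t ((hasDerivAt_id t).sub_const x))
      have h := (((h1.sub h2).mul (h1.sub h2)).div_const 2).sub (h2.mul h2)
      refine h.congr_deriv ?_
      simp only [Pi.sub_apply]
      ring
    have hint1 : IntervalIntegrable
        (fun t => (A (t+x) - A (t-x))*(deriv A (t+x) + deriv A (t-x))) volume 0 (2*π) :=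
      (by fun_prop : Continuous _).intervalIntegrable _ _
    have hint2 : IntervalIntegrable (fun t => 2*(A (t+x)*deriv A (t-x))) volume 0 (2*π) :=
      (by fun_prop : Continuous _).intervalIntegrable _ _
    have hzero : (∫ t in (0:ℝ)..(2*π),
        ((A (t+x) - A (t-x))*(deriv A (t+x) + deriv A (t-x)) - 2*(A (t+x)*deriv A (t-x)))) = 0 := by
      rw [intervalIntegral.integral_eq_sub_of_hasDerivAt (fun t _ => hF t) (hint1.sub hint2)]
      have e1 : (2*π + x) = (x + 2*π) := by ring
      have e2 : (2*π - x) = (-x + 2*π) := by ring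
      rw [e1, e2, hper, hper]
      simp
    have split : (∫ t in (0:ℝ)..(2*π),
        (A (t+x) - A (t-x))*(deriv A (t+x) + deriv A (t-x)))
        = 2 * ∫ t in (0:ℝ)..(2*π), A (t+x)*deriv A (t-x) := by
      rw [intervalIntegral.integral_sub hint1 hint2, intervalIntegral.integral_const_mul] at hzero
      linarith
    have subst : (∫ t in (0:ℝ)..(2*π), A (t+x)*deriv A (t-x))
        = ∫ u in (0:ℝ)..(2*π), A (u+2*x)*deriv A u := by
      have h1 : (∫ t in (0:ℝ)..(2*π), A (t+x)*deriv A (t-x))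
          = ∫ t in (0:ℝ)..(2*π), (fun u => A (u+2*x)*deriv A u) (t - x) := by
        apply intervalIntegral.integral_congr
        intro t _
        simp only
        congr 2
        ring
      rw [h1, intervalIntegral.integral_comp_sub_right (fun u => A (u+2*x)*deriv A u) x]
      have hg : Function.Periodic (fun u => A (u+2*x)*deriv A u) (2*π) := by
        intro u
        simp only
        rw [show u + 2*π + 2*x = (u + 2*x) + 2*π by ring, hper, hper']
      have h2 := hg.intervalIntegral_add_eq (0 - x) 0
      rw [show (0:ℝ) - x + 2*π = 2*π - x by ring, show (0:ℝ) + 2*π = 2*π by ring] at h2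
      exact h2
    rw [show (∫ t in (0:ℝ)..(2*π),
        2*x*(A (t+x) - A (t-x))*(4*deriv A (t+x) + 4*deriv A (t-x)))
        = 8*x * ∫ t in (0:ℝ)..(2*π), (A (t+x) - A (t-x))*(deriv A (t+x) + deriv A (t-x)) by
      rw [← intervalIntegral.integral_const_mul]
      apply intervalIntegral.integral_congr
      intro t _
      ring]
    rw [split, subst, intervalIntegral.integral_const_mul]
    ring
  simp_rw [step2]
  -- Step 3: swap again
  rw [swap_helper (f := fun x u => 16*x*(A (u+2*x)*deriv A u)) (by fun_prop)
      (le_of_lt pi_pos) (by positivity)]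
  -- Step 4: inner x-integral
  have step4 : ∀ u : ℝ, (∫ x in (0:ℝ)..π, 16*x*(A (u+2*x)*deriv A u))
      = deriv A u * (8*π*B u - 4*C) := by
    intro u
    have hpull : (∫ x in (0:ℝ)..π, 16*x*(A (u+2*x)*deriv A u))
        = deriv A u * ∫ x in (0:ℝ)..π, 16*x*A (u+2*x) := by
      rw [← intervalIntegral.integral_const_mul]
      apply intervalIntegral.integral_congr
      intro x _
      ring
    have hG : ∀ x : ℝ, HasDerivAt (fun x => 8*x*B (u+2*x))
        (8*B (u+2*x) + 16*x*A (u+2*x)) x := by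
      intro x
      have hlin : HasDerivAt (fun x : ℝ => u + 2*x) 2 x := by
        simpa using (((hasDerivAt_id x).const_mul 2).const_add u)
      have hb : HasDerivAt (fun x : ℝ => B (u+2*x)) (A (u+2*x) * 2) x :=
        HasDerivAt.comp (h₂ := B) x (hB (u+2*x)) hlin
      have h8 : HasDerivAt (fun x : ℝ => 8*x) 8 x := by
        simpa using ((hasDerivAt_id x).const_mul 8)
      have h := h8.mul hb
      refine h.congr_deriv ?_
      ring
    have hsum : (∫ x in (0:ℝ)..π, (8*B (u+2*x) + 16*x*A (u+2*x))) = 8*π*B u := by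
      rw [intervalIntegral.integral_eq_sub_of_hasDerivAt (fun x _ => hG x)
        ((by fun_prop : Continuous _).intervalIntegrable _ _)]
      rw [show u + 2*π = u + 2*π from rfl]
      rw [hBper u]
      ring_nf
    have hBint : (∫ x in (0:ℝ)..π, B (u+2*x)) = C / 2 := by
      have h1 : (∫ x in (0:ℝ)..π, B (u+2*x))
          = (2:ℝ)⁻¹ • ∫ y in (2*(0:ℝ))..(2*π), B (u+y) :=
        intervalIntegral.integral_comp_mul_left (fun y => B (u+y)) two_ne_zero
      rw [h1]
      have h2 : (∫ y in (2*(0:ℝ))..(2*π), B (u+y))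
          = ∫ y in (0:ℝ)..(2*π), (fun z => B z) (y + u) := by
        rw [mul_zero]
        apply intervalIntegral.integral_congr
        intro y _
        simp [add_comm]
      rw [h2, intervalIntegral.integral_comp_add_right]
      have h3 := Function.Periodic.intervalIntegral_add_eq (f := B) hBper u 0
      rw [show (0:ℝ) + u = u by ring, show 2*π + u = u + 2*π by ring, h3]
      rw [show (0:ℝ) + 2*π = 2*π by ring]
      simp [hCdef]
      ring
    have hintB : IntervalIntegrable (fun x => 8*B (u+2*x)) volume 0 π :=
      (by fun_prop : Continuous _).intervalIntegrable _ _
    have hintxA : IntervalIntegrable (fun x => 16*x*A (u+2*x)) volume 0 π :=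
      (by fun_prop : Continuous _).intervalIntegrable _ _
    have hxA : (∫ x in (0:ℝ)..π, 16*x*A (u+2*x)) = 8*π*B u - 4*C := by
      rw [intervalIntegral.integral_add hintB hintxA, intervalIntegral.integral_const_mul,
        hBint] at hsum
      linarith
    rw [hpull, hxA]
  simp_rw [step4]
  -- Step 5: final
  have hderint : (∫ u in (0:ℝ)..(2*π), deriv A u) = 0 := by
    rw [intervalIntegral.integral_deriv_eq_sub (fun u _ => hd u)
      (hA'c.intervalIntegrable _ _)]
    rw [show (2*π:ℝ) = 0 + 2*π by ring, hper]
    simp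
  have hABint : (∫ u in (0:ℝ)..(2*π), (deriv A u * B u + A u * A u)) = 0 := by
    have hAB : ∀ u : ℝ, HasDerivAt (fun u => A u * B u) (deriv A u * B u + A u * A u) u :=
      fun u => (hd u).hasDerivAt.mul (hB u)
    rw [intervalIntegral.integral_eq_sub_of_hasDerivAt (fun u _ => hAB u)
      ((by fun_prop : Continuous _).intervalIntegrable _ _)]
    rw [hB2pi, hB0]
    ring
  have hA'B : (∫ u in (0:ℝ)..(2*π), deriv A u * B u) = -I := by
    have h1 : IntervalIntegrable (fun u => deriv A u * B u) volume 0 (2*π) :=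
      (by fun_prop : Continuous _).intervalIntegrable _ _
    have h2 : IntervalIntegrable (fun u => A u * A u) volume 0 (2*π) :=
      (by fun_prop : Continuous _).intervalIntegrable _ _
    rw [intervalIntegral.integral_add h1 h2] at hABint
    have h3 : (∫ u in (0:ℝ)..(2*π), A u * A u) = I := by
      rw [hIdef]
      apply intervalIntegral.integral_congr
      intro u _
      ring
    rw [h3] at hABint
    linarith
  have hfinal : (∫ u in (0:ℝ)..(2*π), deriv A u * (8*π*B u - 4*C))
      = 8*π*(-I) - 4*C*0 := by
    have h1 : IntervalIntegrable (fun u => 8*π*(deriv A u * B u)) volume 0 (2*π) :=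
      (by fun_prop : Continuous _).intervalIntegrable _ _
    have h2 : IntervalIntegrable (fun u => 4*C*(deriv A u)) volume 0 (2*π) :=
      (by fun_prop : Continuous _).intervalIntegrable _ _
    rw [show (∫ u in (0:ℝ)..(2*π), deriv A u * (8*π*B u - 4*C))
        = ∫ u in (0:ℝ)..(2*π), (8*π*(deriv A u * B u) - 4*C*(deriv A u)) by
      apply intervalIntegral.integral_congr
      intro u _
      ring]
    rw [intervalIntegral.integral_sub h1 h2, intervalIntegral.integral_const_mul,
      intervalIntegral.integral_const_mul, hA'B, hderint]
  rw [hfinal]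
  ring
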